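/- Let G be a graph and let B, D be disjoint vertex subsets of G. If the induced subgraph G[B ∪ D] is a tree, then the number of edges of G with one endpoint in B and the other in D equals |cc(B)| + |cc(D)| − 1, where cc(X) denotes the set of connected components of G[X]. -/

import Mathlib

open SimpleGraph

lemma myIsAcyclic_of_hom {A W : Type*} {H1 : SimpleGraph A} {H2 : SimpleGraph W}
    (f : H1 →g H2) (hf : Function.Injective f) (h : H2.IsAcyclic) : H1.IsAcyclic :=
  fun _ c hc => h (c.map f) (hc.map hf)

lemma myCardCCBot {W : Type*} : Nat.card (⊥ : SimpleGraph W).ConnectedComponent = Nat.card W := by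
  refine (Nat.card_eq_of_bijective (⊥ : SimpleGraph W).connectedComponentMk ⟨?_, ?_⟩).symm
  · intro a b hab
    exact (SimpleGraph.reachable_bot).mp (SimpleGraph.ConnectedComponent.exact hab)
  · exact fun c => c.exists_rep

lemma myReachSplit {W : Type*} {H : SimpleGraph W} (v w : W) {u u' : W}
    (p : H.Walk u u') :
    (H \ fromEdgeSet {s(v,w)}).Reachable u u' ∨
      ((H \ fromEdgeSet {s(v,w)}).Reachable u v ∧ (H \ fromEdgeSet {s(v,w)}).Reachable w u') ∨
      ((H \ fromEdgeSet {s(v,w)}).Reachable u w ∧ (H \ fromEdgeSet {s(v,w)}).Reachable v u') := by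
  set H' := H \ fromEdgeSet {s(v,w)} with hH'
  induction p with
  | nil => exact Or.inl (Reachable.refl _)
  | @cons a x b h q ih =>
    by_cases hsym : s(a,x) = s(v,w)
    · rw [Sym2.eq_iff] at hsym
      rcases hsym with ⟨rfl, rfl⟩ | ⟨rfl, rfl⟩
      · rcases ih with h1 | ⟨h1, h2⟩ | ⟨h1, h2⟩
        · exact Or.inr (Or.inl ⟨Reachable.refl _, h1⟩)
        · exact Or.inl ((h1.symm).trans h2)
        · exact Or.inl h2
      · rcases ih with h1 | ⟨h1, h2⟩ | ⟨h1, h2⟩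
        · exact Or.inr (Or.inr ⟨Reachable.refl _, h1⟩)
        · exact Or.inl h2
        · exact Or.inl (h1.symm.trans h2)
    · have hadj : H'.Adj a x := by
        rw [hH', sdiff_adj, fromEdgeSet_adj]
        exact ⟨h, fun hc => hsym (Set.mem_singleton_iff.mp hc.1)⟩
      rcases ih with h1 | ⟨h1, h2⟩ | ⟨h1, h2⟩
      · exact Or.inl (hadj.reachable.trans h1)
      · exact Or.inr (Or.inl ⟨hadj.reachable.trans h1, h2⟩)
      · exact Or.inr (Or.inr ⟨hadj.reachable.trans h1, h2⟩)

lemma myDeleteBridge {W : Type*} [Finite W] {H : SimpleGraph W} {v w : W} (hadj : H.Adj v w)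
    (hnr : ¬(H \ fromEdgeSet {s(v,w)}).Reachable v w) :
    Nat.card (H \ fromEdgeSet {s(v,w)}).ConnectedComponent
      = Nat.card H.ConnectedComponent + 1 := by
  classical
  set H' := H \ fromEdgeSet {s(v,w)} with hH'
  have hle : H' ≤ H := sdiff_le
  have : Fintype W := Fintype.ofFinite W
  have instC : Fintype H.ConnectedComponent := Fintype.ofFinite _
  have instC' : Fintype H'.ConnectedComponent := Fintype.ofFinite _
  let f : H'.ConnectedComponent → H.ConnectedComponent :=
    ConnectedComponent.map (Hom.ofLE hle)
  have hfmk : ∀ x : W, f (H'.connectedComponentMk x) = H.connectedComponentMk x := fun x => rfl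
  have hfiber : ∀ c : H.ConnectedComponent,
      (Finset.univ.filter (fun d => f d = c)).card
        = if c = H.connectedComponentMk v then 2 else 1 := by
    intro c
    refine ConnectedComponent.ind (fun u => ?_) c
    by_cases hc : H.connectedComponentMk u = H.connectedComponentMk v
    · rw [if_pos hc]
      have hset : (Finset.univ.filter (fun d => f d = H.connectedComponentMk u))
          = {H'.connectedComponentMk v, H'.connectedComponentMk w} := by
        ext d
        refine ConnectedComponent.ind (fun x => ?_) d
        simp only [Finset.mem_filter, Finset.mem_univ, true_and, Finset.mem_insert,
          Finset.mem_singleton, hfmk]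
        constructor
        · intro hx
          have hxv : H.Reachable x v := by
            have := (ConnectedComponent.eq).mp (hx.trans hc)
            exact this
          obtain ⟨p⟩ := hxv
          rcases myReachSplit v w p with h1 | ⟨h1, _⟩ | ⟨h1, _⟩
          · exact Or.inl (ConnectedComponent.sound h1)
          · exact Or.inl (ConnectedComponent.sound h1)
          · exact Or.inr (ConnectedComponent.sound h1)
        · rintro (hd | hd)
          · rw [ConnectedComponent.eq] at hd
            rw [ConnectedComponent.sound (hd.mono hle), ← hc]
          · rw [ConnectedComponent.eq] at hd
            rw [ConnectedComponent.sound ((hd.mono hle).trans hadj.symm.reachable), ← hc]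
      rw [hset]
      rw [Finset.card_insert_of_notMem (by
        simp only [Finset.mem_singleton]
        intro hvw
        exact hnr ((ConnectedComponent.eq).mp hvw)), Finset.card_singleton]
    · rw [if_neg hc]
      have hset : (Finset.univ.filter (fun d => f d = H.connectedComponentMk u))
          = {H'.connectedComponentMk u} := by
        ext d
        refine ConnectedComponent.ind (fun x => ?_) d
        simp only [Finset.mem_filter, Finset.mem_univ, true_and, Finset.mem_singleton, hfmk]
        constructor
        · intro hx
          have hxu : H.Reachable x u := (ConnectedComponent.eq).mp hx
          obtain ⟨p⟩ := hxu
          rcases myReachSplit v w p with h1 | ⟨_, h2⟩ | ⟨_, h2⟩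
          · exact ConnectedComponent.sound h1
          · exact absurd (ConnectedComponent.sound
              ((h2.mono hle).symm.trans hadj.symm.reachable)) hc
          · exact absurd (ConnectedComponent.sound (h2.mono hle).symm) hc
        · intro hd
          exact ConnectedComponent.sound ((ConnectedComponent.exact hd).mono hle)
      rw [hset, Finset.card_singleton]
  have hcount : Fintype.card H'.ConnectedComponent = Fintype.card H.ConnectedComponent + 1 := by
    rw [← Finset.card_univ, Finset.card_eq_sum_card_fiberwise
      (fun d _ => Finset.mem_univ (f d))]
    calc ∑ c : H.ConnectedComponent, (Finset.univ.filter (fun d => f d = c)).card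
        = ∑ c : H.ConnectedComponent, (1 + if c = H.connectedComponentMk v then 1 else 0) := by
          refine Finset.sum_congr rfl fun c _ => ?_
          rw [hfiber c]; split <;> rfl
      _ = Fintype.card H.ConnectedComponent + 1 := by
          rw [Finset.sum_add_distrib, Finset.sum_const, Finset.sum_ite_eq',
            if_pos (Finset.mem_univ _)]
          simp [Finset.card_univ]
  simp only [Nat.card_eq_fintype_card]
  exact hcount

lemma myForestCount : ∀ (n : ℕ) {W : Type*} [Finite W] (H : SimpleGraph W),
    H.IsAcyclic → Nat.card H.edgeSet = n →
    Nat.card H.ConnectedComponent + n = Nat.card W := by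
  intro n
  induction n with
  | zero =>
    intro W _ H hac hcard
    rw [Nat.card_eq_zero] at hcard
    rcases hcard with h | h
    · have : H.edgeSet = ∅ := by
        rw [Set.eq_empty_iff_forall_notMem]
        exact fun e he => h.elim' ⟨e, he⟩
      rw [edgeSet_eq_empty] at this
      subst this
      simpa using myCardCCBot
    · exact absurd h (by rw [not_infinite_iff_finite]; exact (Set.toFinite _).to_subtype)
  | succ n ih =>
    intro W _ H hac hcard
    have hne : Nonempty H.edgeSet := (Nat.card_pos_iff.mp (by rw [hcard]; omega)).1
    obtain ⟨⟨e, he⟩⟩ := hne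
    induction e using Sym2.ind with
    | _ v w =>
    have hadj : H.Adj v w := he
    have hbridge : H.IsBridge s(v,w) := (isAcyclic_iff_forall_adj_isBridge.mp hac) hadj
    have hnr : ¬(H \ fromEdgeSet {s(v,w)}).Reachable v w := hbridge
    set H' := H \ fromEdgeSet {s(v,w)} with hH'
    have hac' : H'.IsAcyclic := by
      exact myIsAcyclic_of_hom (Hom.ofLE (sdiff_le : H' ≤ H))
        (fun a b hab => by simpa using hab) hac
    have hedge : H'.edgeSet = H.edgeSet \ {s(v,w)} := by
      rw [hH', edgeSet_sdiff, edgeSet_fromEdgeSet, edgeSet_sdiff_sdiff_isDiag]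
    have hcard' : Nat.card H'.edgeSet = n := by
      rw [hedge, Nat.card_coe_set_eq, Set.ncard_diff_singleton_of_mem he]
      rw [← Nat.card_coe_set_eq, hcard]
      omega
    have := ih H' hac' hcard'
    have hdel := myDeleteBridge hadj hnr
    rw [← hH'] at hdel
    omega

lemma myPairCount {V : Type*} [Fintype V] [DecidableEq V] (G : SimpleGraph V) (X : Set V) :
    {p : V × V | p.1 ∈ X ∧ p.2 ∈ X ∧ G.Adj p.1 p.2}.ncard
      = 2 * Nat.card (G.induce X).edgeSet := by
  classical
  have e : (G.induce X).Dart ≃ {p : V × V | p.1 ∈ X ∧ p.2 ∈ X ∧ G.Adj p.1 p.2} :=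
    { toFun := fun d => ⟨(↑d.toProd.1, ↑d.toProd.2), d.toProd.1.2, d.toProd.2.2, d.adj⟩
      invFun := fun p => ⟨(⟨p.1.1, p.2.1⟩, ⟨p.1.2, p.2.2.1⟩), p.2.2.2⟩
      left_inv := fun d => by cases d; rfl
      right_inv := fun p => by rfl }
  rw [← Nat.card_coe_set_eq, ← Nat.card_congr e, Nat.card_eq_fintype_card,
    dart_card_eq_twice_card_edges, edgeFinset_card, Nat.card_eq_fintype_card]

variable {V : Type*} [Fintype V] [DecidableEq V]

theorem stmt9 (G : SimpleGraph V) (B D : Set V) (hdisj : Disjoint B D)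
    (htree : (G.induce (B ∪ D)).IsTree) :
    {p : V × V | p.1 ∈ B ∧ p.2 ∈ D ∧ G.Adj p.1 p.2}.ncard =
      Nat.card (G.induce B).ConnectedComponent +
        Nat.card (G.induce D).ConnectedComponent - 1 := by
  classical
  have hdBD : ∀ x, x ∈ B → x ∈ D → False := fun x hb hd => Set.disjoint_left.mp hdisj hb hd
  -- vertex count
  have hV : Nat.card ↥(B ∪ D) = Nat.card ↥B + Nat.card ↥D := by
    rw [← Nat.card_sum]
    exact Nat.card_congr (Equiv.Set.union hdisj)
  -- tree edge count
  have htE : Nat.card (G.induce (B ∪ D)).edgeSet + 1 = Nat.card ↥(B ∪ D) := by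
    have h := htree.card_edgeFinset
    rw [edgeFinset_card] at h
    rw [Nat.card_eq_fintype_card, Nat.card_eq_fintype_card]
    exact h
  -- acyclicity of the two induced pieces
  have hacB : (G.induce B).IsAcyclic :=
    myIsAcyclic_of_hom (⟨fun x => ⟨x.1, Or.inl x.2⟩, id⟩ : G.induce B →g G.induce (B ∪ D))
      (fun a b hab => by have h := Subtype.ext_iff.mp hab; exact Subtype.ext h) htree.2
  have hacD : (G.induce D).IsAcyclic :=
    myIsAcyclic_of_hom (⟨fun x => ⟨x.1, Or.inr x.2⟩, id⟩ : G.induce D →g G.induce (B ∪ D))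
      (fun a b hab => by have h := Subtype.ext_iff.mp hab; exact Subtype.ext h) htree.2
  have hB := myForestCount (Nat.card (G.induce B).edgeSet) (G.induce B) hacB rfl
  have hD := myForestCount (Nat.card (G.induce D).edgeSet) (G.induce D) hacD rfl
  -- swap
  have hswap : {p : V × V | p.1 ∈ D ∧ p.2 ∈ B ∧ G.Adj p.1 p.2}.ncard
      = {p : V × V | p.1 ∈ B ∧ p.2 ∈ D ∧ G.Adj p.1 p.2}.ncard := by
    have himg : {p : V × V | p.1 ∈ D ∧ p.2 ∈ B ∧ G.Adj p.1 p.2}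
        = Prod.swap '' {p : V × V | p.1 ∈ B ∧ p.2 ∈ D ∧ G.Adj p.1 p.2} := by
      ext ⟨a, b⟩
      constructor
      · rintro ⟨h1, h2, h3⟩
        exact ⟨(b, a), ⟨h2, h1, h3.symm⟩, rfl⟩
      · rintro ⟨⟨x, y⟩, ⟨g1, g2, g3⟩, heq⟩
        rw [Prod.ext_iff] at heq
        obtain ⟨h1, h2⟩ := heq
        simp only [Prod.swap] at h1 h2
        subst h1; subst h2
        exact ⟨g2, g1, g3.symm⟩
    rw [himg, Set.ncard_image_of_injective _ Prod.swap_injective]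
  -- partition of pairs
  have e1 : {p : V × V | p.1 ∈ B ∪ D ∧ p.2 ∈ B ∪ D ∧ G.Adj p.1 p.2}
      = ({p : V × V | p.1 ∈ B ∧ p.2 ∈ B ∧ G.Adj p.1 p.2}
          ∪ {p : V × V | p.1 ∈ D ∧ p.2 ∈ D ∧ G.Adj p.1 p.2})
        ∪ ({p : V × V | p.1 ∈ B ∧ p.2 ∈ D ∧ G.Adj p.1 p.2}
          ∪ {p : V × V | p.1 ∈ D ∧ p.2 ∈ B ∧ G.Adj p.1 p.2}) := by
    ext ⟨a, b⟩
    simp only [Set.mem_setOf_eq, Set.mem_union]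
    tauto
  have d2 : Disjoint {p : V × V | p.1 ∈ B ∧ p.2 ∈ B ∧ G.Adj p.1 p.2}
      {p : V × V | p.1 ∈ D ∧ p.2 ∈ D ∧ G.Adj p.1 p.2} :=
    Set.disjoint_left.mpr (fun p hp hq => hdBD p.1 hp.1 hq.1)
  have d3 : Disjoint {p : V × V | p.1 ∈ B ∧ p.2 ∈ D ∧ G.Adj p.1 p.2}
      {p : V × V | p.1 ∈ D ∧ p.2 ∈ B ∧ G.Adj p.1 p.2} :=
    Set.disjoint_left.mpr (fun p hp hq => hdBD p.1 hp.1 hq.1)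
  have d1 : Disjoint ({p : V × V | p.1 ∈ B ∧ p.2 ∈ B ∧ G.Adj p.1 p.2}
          ∪ {p : V × V | p.1 ∈ D ∧ p.2 ∈ D ∧ G.Adj p.1 p.2})
        ({p : V × V | p.1 ∈ B ∧ p.2 ∈ D ∧ G.Adj p.1 p.2}
          ∪ {p : V × V | p.1 ∈ D ∧ p.2 ∈ B ∧ G.Adj p.1 p.2}) := by
    refine Set.disjoint_left.mpr ?_
    rintro p (hp | hp) (hq | hq)
    · exact hdBD p.2 hp.2.1 hq.2.1
    · exact hdBD p.1 hp.1 hq.1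
    · exact hdBD p.1 hq.1 hp.1
    · exact hdBD p.2 hq.2.1 hp.2.1
  have hsplit : {p : V × V | p.1 ∈ B ∪ D ∧ p.2 ∈ B ∪ D ∧ G.Adj p.1 p.2}.ncard
      = {p : V × V | p.1 ∈ B ∧ p.2 ∈ B ∧ G.Adj p.1 p.2}.ncard
        + {p : V × V | p.1 ∈ D ∧ p.2 ∈ D ∧ G.Adj p.1 p.2}.ncard
        + ({p : V × V | p.1 ∈ B ∧ p.2 ∈ D ∧ G.Adj p.1 p.2}.ncard
          + {p : V × V | p.1 ∈ D ∧ p.2 ∈ B ∧ G.Adj p.1 p.2}.ncard) := by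
    rw [e1, Set.ncard_union_eq d1 (Set.toFinite _) (Set.toFinite _),
      Set.ncard_union_eq d2 (Set.toFinite _) (Set.toFinite _),
      Set.ncard_union_eq d3 (Set.toFinite _) (Set.toFinite _)]
  rw [myPairCount G (B ∪ D), myPairCount G B, myPairCount G D, hswap] at hsplit
  omega
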